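/- Let H be a finite-dimensional real inner product space, B self-adjoint positive definite on H, τ > 0, N ∈ ℕ, w₀ ∈ H, and ψ¹,…,ψᴺ ∈ H. Define w⁰ = w₀ and for n = 0,…,N−1 let w^{n+1} be the unique solution of (w^{n+1} − w^n)/τ + B w^{n+1} = ψ^{n+1}. Then ‖w^{n+1}‖² ≤ ‖w₀‖² + (1/2)∑_{k=0}^{n} τ ⟨B⁻¹ψ^{k+1}, ψ^{k+1}⟩ for all n < N. -/

import Mathlib

open scoped RealInnerProductSpace

theorem stmt_5 {H : Type*} [NormedAddCommGroup H] [InnerProductSpace ℝ H]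
    [FiniteDimensional ℝ H]
    (B Binv : H →ₗ[ℝ] H) (hB : B.IsSymmetric)
    (hBpos : ∀ u : H, u ≠ 0 → 0 < ⟪B u, u⟫)
    (hinv1 : ∀ x, B (Binv x) = x) (hinv2 : ∀ x, Binv (B x) = x)
    (τ : ℝ) (hτ : 0 < τ) (N : ℕ) (w₀ : H) (ψ : ℕ → H) (w : ℕ → H)
    (hw0 : w 0 = w₀)
    (hstep : ∀ n < N, (1 / τ) • (w (n + 1) - w n) + B (w (n + 1)) = ψ (n + 1)) :
    ∀ n < N, ‖w (n + 1)‖ ^ 2 ≤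
      ‖w₀‖ ^ 2 + 1 / 2 * ∑ k ∈ Finset.range (n + 1), τ * ⟪Binv (ψ (k + 1)), ψ (k + 1)⟫ := by
  have hsemi : ∀ x : H, 0 ≤ ⟪B x, x⟫ := by
    intro x
    by_cases hx : x = 0
    · simp [hx]
    · exact le_of_lt (hBpos x hx)
  have step : ∀ n < N, ‖w (n + 1)‖ ^ 2 ≤
      ‖w n‖ ^ 2 + τ / 2 * ⟪Binv (ψ (n + 1)), ψ (n + 1)⟫ := by
    intro n hn
    set v := w (n + 1) with hv
    set u := Binv (ψ (n + 1)) with hu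
    have hψ : B u = ψ (n + 1) := hinv1 _
    have heq := congrArg (fun z => ⟪z, v⟫) (hstep n hn)
    simp only [inner_add_left, real_inner_smul_left, inner_sub_left] at heq
    -- h1 : ⟪w n, v⟫ ≤ (‖w n‖^2 + ‖v‖^2)/2
    have h1 : ⟪w n, v⟫ ≤ (‖w n‖ ^ 2 + ‖v‖ ^ 2) / 2 := by
      have := real_inner_le_norm (w n) v
      nlinarith [sq_nonneg (‖w n‖ - ‖v‖)]
    -- h2 : ⟪ψ, v⟫ ≤ ⟪B v, v⟫ + (1/4) ⟪B u, u⟫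
    have h2 : ⟪ψ (n + 1), v⟫ ≤ ⟪B v, v⟫ + (1 / 4) * ⟪B u, u⟫ := by
      have hpos := hsemi (v - (1 / 2 : ℝ) • u)
      have hsym : ⟪B v, u⟫ = ⟪B u, v⟫ := by
        rw [hB v u, real_inner_comm]
      simp only [map_sub, map_smul, inner_sub_left, inner_sub_right,
        real_inner_smul_left, real_inner_smul_right] at hpos
      rw [← hψ]
      nlinarith [hpos]
    have hBinv : ⟪Binv (ψ (n + 1)), ψ (n + 1)⟫ = ⟪B u, u⟫ := by
      rw [← hu, ← hψ, real_inner_comm]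
    have hvv : ⟪v, v⟫ = ‖v‖ ^ 2 := real_inner_self_eq_norm_sq v
    rw [hBinv]
    rw [← hv] at heq
    have h3 : 1 / τ * (⟪v, v⟫ - ⟪w n, v⟫) ≤ 1 / 4 * ⟪B u, u⟫ := by linarith
    have key : ⟪v, v⟫ - ⟪w n, v⟫ ≤ τ * (1 / 4 * ⟪B u, u⟫) := by
      calc ⟪v, v⟫ - ⟪w n, v⟫ = τ * (1 / τ * (⟪v, v⟫ - ⟪w n, v⟫)) := by
            field_simp
        _ ≤ τ * (1 / 4 * ⟪B u, u⟫) := mul_le_mul_of_nonneg_left h3 hτ.le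
    nlinarith
  intro n
  induction n with
  | zero =>
    intro hn
    have key := step 0 hn
    rw [hw0] at key
    simp only [zero_add, Finset.sum_range_one]
    linarith
  | succ m ih =>
    intro hn
    have key := step (m + 1) hn
    have h2 := ih (lt_trans (Nat.lt_succ_self m) hn)
    rw [Finset.sum_range_succ]
    linarith
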